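/- arXiv:0704.3785 — 3 statements merged into one kernel-verified Lean document; each statement's English description precedes it below -/
import Mathlib

section
/- Let μ be a Radon measure on ℝ^m with support Σ, K ⊆ Σ compact, n a positive integer, α > 0, and C_K > 0. Suppose |μ(B(x,tr))/μ(B(x,r)) − t^n| ≤ C_K r^α for all r ∈ (0,1], t ∈ [1/2,1], and x ∈ K. Then there is a constant C depending only on n such that |μ(B(x,τr))/μ(B(x,r)) − τ^n| ≤ C·C_K r^α for all r ∈ (0,1], all τ ∈ (0,1], and all x ∈ K. -/
open MeasureTheory Metric

/-- iterating the Hölder-doubling condition from `t ∈ [1/2,1]`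
to all `τ ∈ (0,1]`, with a constant depending only on `n`. -/
theorem stmt_0 (n : ℕ) (hn : 0 < n) :
    ∃ C : ℝ, 0 < C ∧
      ∀ (m : ℕ) (μ : Measure (EuclideanSpace ℝ (Fin m)))
        (K : Set (EuclideanSpace ℝ (Fin m))) (α CK : ℝ),
        0 < α → 0 < CK → IsCompact K →
        (∀ K' : Set (EuclideanSpace ℝ (Fin m)), IsCompact K' → μ K' < ⊤) →
        (∀ x ∈ K, ∀ r > (0:ℝ), 0 < μ (ball x r)) →
        (∀ x ∈ K, ∀ r ∈ Set.Ioc (0:ℝ) 1, ∀ t ∈ Set.Icc (1/2:ℝ) 1,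
          |(μ (ball x (t * r))).toReal / (μ (ball x r)).toReal - t ^ n| ≤ CK * r ^ α) →
        ∀ x ∈ K, ∀ r ∈ Set.Ioc (0:ℝ) 1, ∀ τ ∈ Set.Ioc (0:ℝ) 1,
          |(μ (ball x (τ * r))).toReal / (μ (ball x r)).toReal - τ ^ n| ≤ C * CK * r ^ α := by
  refine ⟨3, by norm_num, ?_⟩
  intro m μ K α CK hα hCK hK hfin hpos hH x hx r hr τ hτ
  obtain ⟨hr0, hr1⟩ := hr
  obtain ⟨hτ0, hτ1⟩ := hτ
  have hball_fin : ∀ s : ℝ, μ (ball x s) ≠ ⊤ := fun s =>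
    (lt_of_le_of_lt (measure_mono ball_subset_closedBall)
      (hfin _ (isCompact_closedBall x s))).ne
  -- the dyadic sequence of measures
  set g : ℕ → ℝ := fun k => (μ (ball x ((1/2 : ℝ)^k * r))).toReal with hg
  have hgpos : ∀ k, 0 < g k := by
    intro k
    have h1 : (0:ℝ) < (1/2 : ℝ)^k * r := by positivity
    exact ENNReal.toReal_pos (hpos x hx _ h1).ne' (hball_fin _)
  have hrpow_pos : 0 < r ^ α := Real.rpow_pos_of_pos hr0 α
  have hEpos : 0 < CK * r ^ α := by positivity
  have hgle : ∀ k, g k ≤ g 0 := by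
    intro k
    apply ENNReal.toReal_mono (hball_fin _)
    apply measure_mono
    apply ball_subset_ball
    have : (1/2:ℝ)^k ≤ 1 := by
      apply pow_le_one₀ <;> norm_num
    nlinarith
  have hratio_le_one : ∀ k, g k / g 0 ≤ 1 := fun k =>
    (div_le_one (hgpos 0)).2 (hgle k)
  have hratio_nonneg : ∀ k, 0 ≤ g k / g 0 := fun k =>
    div_nonneg (hgpos k).le (hgpos 0).le
  have hrk : ∀ k : ℕ, (1/2:ℝ)^k * r ∈ Set.Ioc (0:ℝ) 1 := by
    intro k
    constructor
    · positivity
    · have h1 : (1/2:ℝ)^k ≤ 1 := by apply pow_le_one₀ <;> norm_num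
      nlinarith
  have hrpow_le : ∀ k : ℕ, ((1/2:ℝ)^k * r) ^ α ≤ r ^ α := by
    intro k
    apply Real.rpow_le_rpow (by positivity) _ hα.le
    have h1 : (1/2:ℝ)^k ≤ 1 := by apply pow_le_one₀ <;> norm_num
    nlinarith
  -- one-step estimate
  set D : ℝ := (1/2 : ℝ)^n with hD
  have hDnonneg : 0 ≤ D := by positivity
  have hDle : D ≤ 1/2 := by
    calc D ≤ (1/2:ℝ)^1 := by
            apply pow_le_pow_of_le_one (by norm_num) (by norm_num) hn
         _ = 1/2 := pow_one _
  have hstep : ∀ k : ℕ, |g (k+1) / g k - D| ≤ CK * r ^ α := by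
    intro k
    have h := hH x hx ((1/2:ℝ)^k * r) (hrk k) (1/2) ⟨le_refl _, by norm_num⟩
    have harg : (1/2 : ℝ) * ((1/2:ℝ)^k * r) = (1/2:ℝ)^(k+1) * r := by ring
    rw [harg] at h
    calc |g (k+1) / g k - D| ≤ CK * (((1/2:ℝ)^k * r) ^ α) := h
      _ ≤ CK * r ^ α := by
          exact mul_le_mul_of_nonneg_left (hrpow_le k) hCK.le
  -- main induction
  have hmain : ∀ k : ℕ, |g k / g 0 - D^k| ≤ 2 * (CK * r ^ α) * (1 - (1/2:ℝ)^k) := by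
    intro k
    induction k with
    | zero =>
        simp [div_self (hgpos 0).ne']
    | succ k ih =>
        have hsplit : g (k+1) / g 0 = (g (k+1) / g k) * (g k / g 0) :=
          (div_mul_div_cancel₀ (hgpos k).ne' ).symm
        have hdecomp : g (k+1) / g 0 - D^(k+1) =
            (g (k+1) / g k - D) * (g k / g 0) + D * (g k / g 0 - D^k) := by
          rw [hsplit]; ring
        have h1 : |(g (k+1) / g k - D) * (g k / g 0)| ≤ CK * r ^ α := by
          rw [abs_mul, abs_of_nonneg (hratio_nonneg k)]
          calc |g (k+1) / g k - D| * (g k / g 0)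
              ≤ (CK * r ^ α) * 1 :=
                mul_le_mul (hstep k) (hratio_le_one k) (hratio_nonneg k) hEpos.le
            _ = CK * r ^ α := mul_one _
        have h2 : |D * (g k / g 0 - D^k)| ≤ (1/2) * (2 * (CK * r ^ α) * (1 - (1/2:ℝ)^k)) := by
          rw [abs_mul, abs_of_nonneg hDnonneg]
          apply mul_le_mul hDle ih (abs_nonneg _) (by norm_num)
        calc |g (k+1) / g 0 - D^(k+1)|
            ≤ |(g (k+1) / g k - D) * (g k / g 0)| + |D * (g k / g 0 - D^k)| := by
              rw [hdecomp]; exact abs_add_le _ _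
          _ ≤ CK * r ^ α + (1/2) * (2 * (CK * r ^ α) * (1 - (1/2:ℝ)^k)) :=
              add_le_add h1 h2
          _ = 2 * (CK * r ^ α) * (1 - (1/2:ℝ)^(k+1)) := by ring
  have hmain' : ∀ k : ℕ, |g k / g 0 - D^k| ≤ 2 * (CK * r ^ α) := by
    intro k
    refine (hmain k).trans ?_
    have h1 : (0:ℝ) < (1/2:ℝ)^k := by positivity
    nlinarith
  -- locate τ dyadically
  obtain ⟨k, hk1, hk2⟩ := exists_nat_pow_near_of_lt_one hτ0 hτ1
    (by norm_num : (0:ℝ) < 1/2) (by norm_num : (1/2:ℝ) < 1)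
  -- τ = s * (1/2)^k with s ∈ (1/2, 1]
  set s : ℝ := τ * 2^k with hs
  have h2pow : (2:ℝ)^k * (1/2:ℝ)^k = 1 := by
    rw [← mul_pow]; norm_num
  have hs_half : (1/2:ℝ) ≤ s := by
    have h3 : (1/2:ℝ)^(k+1) < τ := hk1
    have h4 : (0:ℝ) < (2:ℝ)^k := by positivity
    rw [hs]
    rw [pow_succ] at h3
    nlinarith
  have hs_one : s ≤ 1 := by
    have h4 : (0:ℝ) < (2:ℝ)^k := by positivity
    rw [hs]; nlinarith
  have hτ_eq : τ = s * (1/2:ℝ)^k := by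
    rw [hs]; field_simp; exact h2pow.symm
  -- apply hypothesis at scale (1/2)^k * r with t = s
  have h := hH x hx ((1/2:ℝ)^k * r) (hrk k) s ⟨hs_half, hs_one⟩
  have harg : s * ((1/2:ℝ)^k * r) = τ * r := by
    rw [hτ_eq]; ring
  rw [harg] at h
  have h' : |(μ (ball x (τ * r))).toReal / g k - s ^ n| ≤ CK * r ^ α :=
    h.trans (mul_le_mul_of_nonneg_left (hrpow_le k) hCK.le)
  -- combine
  set A : ℝ := (μ (ball x (τ * r))).toReal with hA
  have hg0 : g 0 = (μ (ball x r)).toReal := by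
    simp [hg]
  have hsplit : A / (μ (ball x r)).toReal = (A / g k) * (g k / g 0) := by
    rw [← hg0]; exact (div_mul_div_cancel₀ (hgpos k).ne').symm
  have hτn : τ ^ n = s ^ n * D ^ k := by
    rw [hτ_eq, mul_pow, hD, ← pow_mul, ← pow_mul, Nat.mul_comm]
  have hsn_nonneg : 0 ≤ s ^ n := by positivity
  have hsn_le : s ^ n ≤ 1 := pow_le_one₀ (by linarith) hs_one
  have hdecomp : A / (μ (ball x r)).toReal - τ ^ n =
      (A / g k - s ^ n) * (g k / g 0) + s ^ n * (g k / g 0 - D ^ k) := by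
    rw [hsplit, hτn]; ring
  calc |A / (μ (ball x r)).toReal - τ ^ n|
      ≤ |(A / g k - s ^ n) * (g k / g 0)| + |s ^ n * (g k / g 0 - D ^ k)| := by
        rw [hdecomp]; exact abs_add_le _ _
    _ ≤ CK * r ^ α + 2 * (CK * r ^ α) := by
        apply add_le_add
        · rw [abs_mul, abs_of_nonneg (hratio_nonneg k)]
          calc |A / g k - s ^ n| * (g k / g 0)
              ≤ (CK * r ^ α) * 1 :=
                mul_le_mul h' (hratio_le_one k) (hratio_nonneg k) hEpos.le
            _ = CK * r ^ α := mul_one _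
        · rw [abs_mul, abs_of_nonneg hsn_nonneg]
          calc s ^ n * |g k / g 0 - D ^ k|
              ≤ 1 * (2 * (CK * r ^ α)) :=
                mul_le_mul hsn_le (hmain' k) (abs_nonneg _) (by norm_num)
            _ = 2 * (CK * r ^ α) := one_mul _
    _ = 3 * CK * r ^ α := by ring
end

section
/- Let μ be a Radon measure on ℝ^m supported on Σ, n a positive integer, α > 0. Suppose for every compact K ⊆ Σ there is C_K with |μ(B(x,tr))/μ(B(x,r)) − t^n| ≤ C_K r^α for x ∈ K and all t, r ∈ (0,1]. Then for every x ∈ Σ the density D(x) = lim_{r→0⁺} μ(B(x,r))/(ω_n r^n) exists and satisfies 0 < D(x) < ∞. -/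
set_option maxHeartbeats 1000000


open MeasureTheory Metric

/-- `ω_n`: the Lebesgue measure of the unit ball in `ℝ^n`. -/
noncomputable def omegaBall (n : ℕ) : ℝ :=
  (MeasureTheory.volume (Metric.ball (0 : EuclideanSpace ℝ (Fin n)) 1)).toReal

/-- existence and positivity/finiteness of the density
`D(x) = lim_{r→0⁺} μ(B(x,r))/(ω_n r^n)` at every point of the support. -/
theorem stmt_1 (m n : ℕ) (hn : 0 < n) (α : ℝ) (hα : 0 < α)
    (μ : Measure (EuclideanSpace ℝ (Fin m))) [IsLocallyFiniteMeasure μ]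
    (S : Set (EuclideanSpace ℝ (Fin m)))
    (hS : S = {x | ∀ r > (0:ℝ), 0 < μ (ball x r)})
    (h : ∀ K ⊆ S, IsCompact K → ∃ CK : ℝ,
      ∀ x ∈ K, ∀ t ∈ Set.Ioc (0:ℝ) 1, ∀ r ∈ Set.Ioc (0:ℝ) 1,
        |(μ (ball x (t * r))).toReal / (μ (ball x r)).toReal - t ^ n| ≤ CK * r ^ α) :
    ∀ x ∈ S, ∃ D : ℝ, 0 < D ∧
      Filter.Tendsto (fun r : ℝ => (μ (ball x r)).toReal / (omegaBall n * r ^ n))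
        (nhdsWithin 0 (Set.Ioi 0)) (nhds D) := by
  intro x hxS
  have hx : ∀ r > (0:ℝ), 0 < μ (ball x r) := by rw [hS] at hxS; exact hxS
  obtain ⟨C₀, hC₀⟩ := h {x} (Set.singleton_subset_iff.mpr hxS) isCompact_singleton
  -- the measure of balls, as a real number
  set A : ℝ → ℝ := fun r => (μ (ball x r)).toReal with hA
  have hApos : ∀ r : ℝ, 0 < r → 0 < A r := fun r hr =>
    ENNReal.toReal_pos (hx r hr).ne' measure_ball_lt_top.ne
  -- the density quotient (without the ω_n normalization)
  set f : ℝ → ℝ := fun r => A r / r ^ n with hf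
  have hfpos : ∀ r : ℝ, 0 < r → 0 < f r := fun r hr =>
    div_pos (hApos r hr) (pow_pos hr n)
  -- a nonnegative constant
  set C : ℝ := max C₀ 0 with hCdef
  have hCnonneg : 0 ≤ C := le_max_right _ _
  have hC : ∀ t ∈ Set.Ioc (0:ℝ) 1, ∀ r ∈ Set.Ioc (0:ℝ) 1,
      |A (t * r) / A r - t ^ n| ≤ C * r ^ α := by
    intro t ht r hr
    exact le_trans (hC₀ x rfl t ht r hr) (mul_le_mul_of_nonneg_right (le_max_left _ _)
      (Real.rpow_nonneg hr.1.le _))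
  set c : ℝ := C * 2 ^ n with hcdef
  have hcnonneg : 0 ≤ c := mul_nonneg hCnonneg (by positivity)
  -- the basic one-step estimate
  have step : ∀ r ∈ Set.Ioc (0:ℝ) 1, ∀ s : ℝ, r / 2 ≤ s → s ≤ r →
      |f s - f r| ≤ c * r ^ α * f r := by
    intro r hr s hs1 hs2
    have hr0 : 0 < r := hr.1
    have hs0 : 0 < s := lt_of_lt_of_le (by linarith) hs1
    have ht : s / r ∈ Set.Ioc (0:ℝ) 1 :=
      ⟨div_pos hs0 hr0, (div_le_one hr0).mpr hs2⟩
    have htr : s / r * r = s := div_mul_cancel₀ _ hr0.ne'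
    have key := hC (s / r) ht r hr
    rw [htr] at key
    have hAr : 0 < A r := hApos r hr0
    have hsn : (0:ℝ) < s ^ n := pow_pos hs0 n
    have hfact : f s - f r = (A r / s ^ n) * (A s / A r - (s / r) ^ n) := by
      simp only [hf, div_pow]
      field_simp
    have habs : |f s - f r| ≤ (A r / s ^ n) * (C * r ^ α) := by
      rw [hfact, abs_mul, abs_of_pos (div_pos hAr hsn)]
      exact mul_le_mul_of_nonneg_left key (div_pos hAr hsn).le
    have hbound : A r / s ^ n ≤ 2 ^ n * f r := by
      have h2 : r ≤ 2 * s := by linarith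
      have : A r / s ^ n = f r * (r / s) ^ n := by
        rw [hf]; field_simp
        rw [mul_comm, div_pow, div_mul_cancel₀ _ hsn.ne']
      rw [this]
      have hrs : (r / s) ^ n ≤ 2 ^ n := by
        apply pow_le_pow_left₀ (by positivity)
        rw [div_le_iff₀ hs0]; linarith
      calc f r * (r / s) ^ n ≤ f r * 2 ^ n :=
            mul_le_mul_of_nonneg_left hrs (hfpos r hr0).le
        _ = 2 ^ n * f r := mul_comm _ _
    calc |f s - f r| ≤ (A r / s ^ n) * (C * r ^ α) := habs
      _ ≤ (2 ^ n * f r) * (C * r ^ α) :=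
          mul_le_mul_of_nonneg_right hbound (by positivity)
      _ = c * r ^ α * f r := by rw [hcdef]; ring
  -- geometric constants
  set ρ : ℝ := (2:ℝ) ^ (-α) with hρdef
  have hρ0 : 0 < ρ := Real.rpow_pos_of_pos two_pos _
  have hρ1 : ρ < 1 := Real.rpow_lt_one_of_one_lt_of_neg one_lt_two (by linarith)
  set G : ℝ := (1 - ρ)⁻¹ with hGdef
  have hGpos : 0 < G := inv_pos.mpr (by linarith)
  have hG1 : 1 ≤ G := by
    rw [hGdef, le_inv_comm₀] <;> [skip; norm_num; linarith] <;> linarith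
  have hρne : (1:ℝ) - ρ ≠ 0 := by linarith
  have hGid : 1 + ρ * G = G := by
    rw [hGdef]; field_simp
    ring
  have hhalf : ∀ r : ℝ, 0 < r → (r / 2) ^ α = ρ * r ^ α := by
    intro r hr
    rw [Real.div_rpow hr.le (by norm_num), hρdef, Real.rpow_neg (by norm_num)]
    ring
  -- choose a small radius r₀
  have hrpow0 : Filter.Tendsto (fun r : ℝ => c * G * r ^ α)
      (nhdsWithin 0 (Set.Ioi 0)) (nhds 0) := by
    have h1 : Filter.Tendsto (fun r : ℝ => r ^ α) (nhdsWithin 0 (Set.Ioi 0)) (nhds 0) := by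
      have := (Real.continuousAt_rpow_const 0 α (Or.inr hα.le)).tendsto
      rw [Real.zero_rpow hα.ne'] at this
      exact this.mono_left nhdsWithin_le_nhds
    have := h1.const_mul (c * G)
    simpa using this
  have hev : ∀ᶠ r in nhdsWithin (0:ℝ) (Set.Ioi 0),
      c * G * r ^ α ≤ 1/6 ∧ r ∈ Set.Ioo (0:ℝ) 1 := by
    filter_upwards [hrpow0.eventually_le_const (show (0:ℝ) < 1/6 by norm_num),
      Ioo_mem_nhdsGT_of_mem (Set.mem_Ico.mpr ⟨le_refl (0:ℝ), one_pos⟩)] with r h1 h2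
    exact ⟨h1, h2⟩
  obtain ⟨r₀, hsmall, hr₀⟩ := hev.exists
  have hr₀0 : 0 < r₀ := hr₀.1
  have hr₀1 : r₀ ≤ 1 := hr₀.2.le
  -- upper bound by induction
  have hU : ∀ k : ℕ, ∀ r ∈ Set.Ioc (0:ℝ) r₀, ∀ s : ℝ, r / 2 ^ k ≤ s → s ≤ r →
      f s ≤ f r * Real.exp (c * G * r ^ α) := by
    intro k
    induction k with
    | zero =>
      intro r hr s hs1 hs2
      have : s = r := le_antisymm hs2 (by simpa using hs1)
      subst this
      have hnn : 0 ≤ c * G * s ^ α :=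
        mul_nonneg (mul_nonneg hcnonneg hGpos.le) (Real.rpow_nonneg hr.1.le _)
      nlinarith [Real.one_le_exp hnn, hfpos s hr.1]
    | succ k ih =>
      intro r hr s hs1 hs2
      have hr0 : 0 < r := hr.1
      have hrIoc : r ∈ Set.Ioc (0:ℝ) 1 := ⟨hr0, le_trans hr.2 hr₀1⟩
      have hrα : 0 ≤ r ^ α := Real.rpow_nonneg hr0.le _
      have hstep2 : f (r/2) ≤ f r * Real.exp (c * r ^ α) := by
        have := step r hrIoc (r/2) (le_refl _) (by linarith)
        have h1 : f (r/2) ≤ f r + c * r ^ α * f r := by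
          have := abs_le.mp this
          linarith [this.2]
        calc f (r/2) ≤ f r * (1 + c * r ^ α) := by nlinarith
          _ ≤ f r * Real.exp (c * r ^ α) := by
              apply mul_le_mul_of_nonneg_left _ (hfpos r hr0).le
              linarith [Real.add_one_le_exp (c * r ^ α)]
      by_cases hcase : r / 2 ≤ s
      · -- one step suffices
        have := step r hrIoc s hcase hs2
        have h1 : f s ≤ f r + c * r ^ α * f r := by
          have := abs_le.mp this; linarith [this.2]
        have hexp : 1 + c * r ^ α ≤ Real.exp (c * G * r ^ α) := by
          have h2 : c * r ^ α ≤ c * G * r ^ α := by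
            nlinarith [mul_nonneg (mul_nonneg hcnonneg (sub_nonneg.mpr hG1)) hrα]
          linarith [Real.add_one_le_exp (c * r ^ α),
            Real.exp_le_exp.mpr h2]
        nlinarith [hfpos r hr0]
      · push_neg at hcase
        have hr2 : r / 2 ∈ Set.Ioc (0:ℝ) r₀ := ⟨by linarith, by linarith [hr.2]⟩
        have hs1' : (r/2) / 2 ^ k ≤ s := by
          rw [div_div]
          calc r / (2 * 2 ^ k) = r / 2 ^ (k+1) := by rw [pow_succ]; ring_nf
          _ ≤ s := hs1
        have := ih (r/2) hr2 s hs1' hcase.le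
        have hexpeq : Real.exp (c * r ^ α) * Real.exp (c * G * (r/2) ^ α)
            = Real.exp (c * G * r ^ α) := by
          rw [← Real.exp_add, hhalf r hr0]
          congr 1
          have : c * r ^ α + c * G * (ρ * r ^ α) = (1 + ρ * G) * (c * r ^ α) := by ring
          rw [this, hGid]; ring
        calc f s ≤ f (r/2) * Real.exp (c * G * (r/2) ^ α) := this
          _ ≤ (f r * Real.exp (c * r ^ α)) * Real.exp (c * G * (r/2) ^ α) :=
              mul_le_mul_of_nonneg_right hstep2 (Real.exp_pos _).le
          _ = f r * Real.exp (c * G * r ^ α) := by rw [mul_assoc, hexpeq]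
  -- uniform upper bound on (0, r₀]
  set M : ℝ := 3 * f r₀ with hMdef
  have hMpos : 0 < M := by
    have := hfpos r₀ hr₀0; rw [hMdef]; linarith
  have hM : ∀ r ∈ Set.Ioc (0:ℝ) r₀, f r ≤ M := by
    intro r hr
    obtain ⟨k, hk⟩ := exists_pow_lt_of_lt_one (div_pos hr.1 hr₀0) (show (1/2:ℝ) < 1 by norm_num)
    have h2k : (0:ℝ) < 2 ^ k := by positivity
    have hk1 : (1:ℝ)/2^k < r/r₀ := by rwa [one_div_pow] at hk
    have hk' : r₀ / 2 ^ k ≤ r := by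
      rw [div_le_iff₀ h2k]
      rw [div_lt_div_iff₀ h2k hr₀0] at hk1
      linarith
    have := hU k r₀ ⟨hr₀0, le_refl _⟩ r hk' hr.2
    have hexp : Real.exp (c * G * r₀ ^ α) ≤ 3 := by
      have e1 : Real.exp (c * G * r₀ ^ α) ≤ Real.exp 1 :=
        Real.exp_le_exp.mpr (by linarith)
      linarith [Real.exp_one_lt_d9]
    calc f r ≤ f r₀ * Real.exp (c * G * r₀ ^ α) := this
      _ ≤ f r₀ * 3 := mul_le_mul_of_nonneg_left hexp (hfpos r₀ hr₀0).le
      _ = M := by rw [hMdef]; ring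
  -- Cauchy-type estimate by induction
  have hP : ∀ k : ℕ, ∀ r ∈ Set.Ioc (0:ℝ) r₀, ∀ s : ℝ, r / 2 ^ k ≤ s → s ≤ r →
      |f s - f r| ≤ c * M * G * r ^ α := by
    intro k
    induction k with
    | zero =>
      intro r hr s hs1 hs2
      have hsr : s = r := le_antisymm hs2 (by simpa using hs1)
      rw [hsr, sub_self, abs_zero]
      have hrα : 0 ≤ r ^ α := Real.rpow_nonneg hr.1.le _
      positivity
    | succ k ih =>
      intro r hr s hs1 hs2
      have hr0 : 0 < r := hr.1
      have hrIoc : r ∈ Set.Ioc (0:ℝ) 1 := ⟨hr0, le_trans hr.2 hr₀1⟩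
      have hrα : 0 ≤ r ^ α := Real.rpow_nonneg hr0.le _
      have hfrM : f r ≤ M := hM r hr
      by_cases hcase : r / 2 ≤ s
      · have := step r hrIoc s hcase hs2
        calc |f s - f r| ≤ c * r ^ α * f r := this
          _ ≤ c * r ^ α * M := mul_le_mul_of_nonneg_left hfrM (by positivity)
          _ ≤ c * M * G * r ^ α := by nlinarith [mul_nonneg (mul_nonneg hcnonneg hrα) hMpos.le]
      · push_neg at hcase
        have hr2 : r / 2 ∈ Set.Ioc (0:ℝ) r₀ := ⟨by linarith, by linarith [hr.2]⟩
        have hs1' : (r/2) / 2 ^ k ≤ s := by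
          rw [div_div]
          calc r / (2 * 2 ^ k) = r / 2 ^ (k+1) := by rw [pow_succ]; ring_nf
          _ ≤ s := hs1
        have h1 := ih (r/2) hr2 s hs1' hcase.le
        have h2 := step r hrIoc (r/2) (le_refl _) (by linarith)
        have h2' : |f (r/2) - f r| ≤ c * r ^ α * M :=
          le_trans h2 (mul_le_mul_of_nonneg_left hfrM (by positivity))
        have h1' : |f s - f (r/2)| ≤ c * M * G * (ρ * r ^ α) := by
          rwa [hhalf r hr0] at h1
        calc |f s - f r| ≤ |f s - f (r/2)| + |f (r/2) - f r| := abs_sub_le _ _ _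
          _ ≤ c * M * G * (ρ * r ^ α) + c * r ^ α * M := by linarith
          _ = (ρ * G + 1) * (c * M * r ^ α) := by ring
          _ = c * M * G * r ^ α := by rw [add_comm (ρ * G) 1, hGid]; ring
  -- key estimate for all radii
  have hKey : ∀ s r : ℝ, 0 < s → s ≤ r → r ≤ r₀ → |f s - f r| ≤ c * M * G * r ^ α := by
    intro s r hs hsr hrr₀
    have hr0 : 0 < r := lt_of_lt_of_le hs hsr
    obtain ⟨k, hk⟩ := exists_pow_lt_of_lt_one (div_pos hs hr0) (show (1/2:ℝ) < 1 by norm_num)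
    have h2k : (0:ℝ) < 2 ^ k := by positivity
    have hk1 : (1:ℝ)/2^k < s/r := by rwa [one_div_pow] at hk
    have hk' : r / 2 ^ k ≤ s := by
      rw [div_le_iff₀ h2k]
      rw [div_lt_div_iff₀ h2k hr0] at hk1
      linarith
    exact hP k r ⟨hr0, hrr₀⟩ s hk' hsr
  -- Cauchy property of the filter image
  have hneBot : (nhdsWithin (0:ℝ) (Set.Ioi 0)).NeBot := nhdsGT_neBot 0
  have hcau : Cauchy (Filter.map f (nhdsWithin (0:ℝ) (Set.Ioi 0))) := by
    refine Metric.cauchy_iff.mpr ⟨Filter.map_neBot, ?_⟩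
    intro ε hε
    have hev2 : ∀ᶠ δ in nhdsWithin (0:ℝ) (Set.Ioi 0),
        c * M * G * δ ^ α < ε ∧ δ ∈ Set.Ioo (0:ℝ) r₀ := by
      have h1 : Filter.Tendsto (fun δ : ℝ => c * M * G * δ ^ α)
          (nhdsWithin 0 (Set.Ioi 0)) (nhds 0) := by
        have h2 : Filter.Tendsto (fun r : ℝ => r ^ α) (nhdsWithin 0 (Set.Ioi 0)) (nhds 0) := by
          have := (Real.continuousAt_rpow_const 0 α (Or.inr hα.le)).tendsto
          rw [Real.zero_rpow hα.ne'] at this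
          exact this.mono_left nhdsWithin_le_nhds
        simpa using h2.const_mul (c * M * G)
      filter_upwards [h1.eventually_lt_const hε,
        Ioo_mem_nhdsGT_of_mem (Set.mem_Ico.mpr ⟨le_refl (0:ℝ), hr₀0⟩)] with δ hδ1 hδ2
      exact ⟨hδ1, hδ2⟩
    obtain ⟨δ, hδ1, hδ2⟩ := hev2.exists
    refine ⟨f '' Set.Ioo 0 δ, ?_, ?_⟩
    · exact Filter.image_mem_map (Ioo_mem_nhdsGT_of_mem (Set.mem_Ico.mpr ⟨le_refl 0, hδ2.1⟩))
    · rintro a ⟨s, hs, rfl⟩ b ⟨r, hrr, rfl⟩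
      have est : ∀ u v : ℝ, u ∈ Set.Ioo (0:ℝ) δ → v ∈ Set.Ioo (0:ℝ) δ → u ≤ v →
          |f u - f v| < ε := by
        intro u v hu hv huv
        have hkey := hKey u v hu.1 huv (by linarith [hv.2, hδ2.2])
        have hmono : v ^ α ≤ δ ^ α := Real.rpow_le_rpow hv.1.le hv.2.le hα.le
        have hcMG : 0 ≤ c * M * G := mul_nonneg (mul_nonneg hcnonneg hMpos.le) hGpos.le
        calc |f u - f v| ≤ c * M * G * v ^ α := hkey
          _ ≤ c * M * G * δ ^ α := mul_le_mul_of_nonneg_left hmono hcMG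
          _ < ε := hδ1
      rcases le_total s r with hle | hle
      · rw [Real.dist_eq]; exact est s r hs hrr hle
      · rw [Real.dist_eq, abs_sub_comm]; exact est r s hrr hs hle
  obtain ⟨D₀, hD₀⟩ := CompleteSpace.complete hcau
  have hTend : Filter.Tendsto f (nhdsWithin (0:ℝ) (Set.Ioi 0)) (nhds D₀) := hD₀
  -- positivity of the limit
  have hlow : f r₀ / 2 ≤ D₀ := by
    apply ge_of_tendsto hTend
    filter_upwards [Ioo_mem_nhdsGT_of_mem (Set.mem_Ico.mpr ⟨le_refl (0:ℝ), hr₀0⟩)] with r hr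
    have := hKey r r₀ hr.1 hr.2.le (le_refl _)
    have habs := (abs_le.mp this).1
    have hcM : c * M * G * r₀ ^ α ≤ f r₀ / 2 := by
      rw [hMdef]
      nlinarith [hfpos r₀ hr₀0, hsmall, mul_nonneg (mul_nonneg hcnonneg hGpos.le)
        (Real.rpow_nonneg hr₀0.le α)]
    linarith
  have hD₀pos : 0 < D₀ := lt_of_lt_of_le (by linarith [hfpos r₀ hr₀0]) hlow
  -- conclude
  have hω : 0 < omegaBall n := by
    apply ENNReal.toReal_pos
    · exact (measure_ball_pos _ _ one_pos).ne'
    · exact measure_ball_lt_top.ne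
  refine ⟨D₀ / omegaBall n, div_pos hD₀pos hω, ?_⟩
  have : (fun r : ℝ => (μ (ball x r)).toReal / (omegaBall n * r ^ n))
      = fun r => f r / omegaBall n := by
    funext r
    rw [hf, hA]
    rw [div_div, mul_comm (r ^ n) (omegaBall n)]
  rw [this]
  exact hTend.div_const _
end

section
/- Let μ be a Radon measure on ℝ^m supported on Σ satisfying: for every compact K ⊆ Σ there is C_K with |μ(B(x,tr))/μ(B(x,r)) − t^n| ≤ C_K r^α for x ∈ K, t, r ∈ (0,1]. Let D(x) = lim_{r→0⁺} μ(B(x,r))/(ω_n r^n). Then log D is locally Hölder continuous with exponent α/(1+α): for every compact K ⊆ Σ there is C'_K such that |log D(x) − log D(y)| ≤ C'_K |x−y|^{α/(1+α)} for x, y ∈ K. -/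
open MeasureTheory Metric

lemma mygeom (r : ℝ) (h0 : 0 ≤ r) (h1 : r < 1) (k : ℕ) :
    ∑ i ∈ Finset.range k, r ^ i ≤ (1-r)⁻¹ :=
  sum_le_hasSum (Finset.range k) (fun i _ => pow_nonneg h0 i)
    (hasSum_geometric_of_lt_one h0 h1)

lemma myabslog (u : ℝ) (hu : 1/2 ≤ u) : |Real.log u| ≤ 2 * |u - 1| := by
  have hu0 : 0 < u := lt_of_lt_of_le (by norm_num) hu
  have h1 : Real.log u ≤ u - 1 := Real.log_le_sub_one_of_pos hu0
  have h2 : Real.log u⁻¹ ≤ u⁻¹ - 1 := Real.log_le_sub_one_of_pos (inv_pos.2 hu0)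
  rw [Real.log_inv] at h2
  have h3 : (1:ℝ) - u⁻¹ ≤ Real.log u := by linarith
  have h4 : u⁻¹ ≤ 2 := by
    rw [inv_le_comm₀ hu0 (by norm_num)]; linarith
  rw [abs_le]
  constructor
  · have h5 : -(u - 1) ≤ |u - 1| := neg_le_abs _
    have h6 : u⁻¹ * u = 1 := inv_mul_cancel₀ hu0.ne'
    nlinarith [abs_nonneg (u - 1)]
  · exact h1.trans ((le_abs_self _).trans (by nlinarith [abs_nonneg (u-1)]))

set_option maxHeartbeats 1000000 in
/-- the logarithm of the density `D` is locally Hölder continuous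
with exponent `α/(1+α)`. -/
theorem stmt_2 (m n : ℕ) (hn : 0 < n) (α : ℝ) (hα : 0 < α)
    (μ : Measure (EuclideanSpace ℝ (Fin m))) [IsLocallyFiniteMeasure μ]
    (S : Set (EuclideanSpace ℝ (Fin m)))
    (hS : S = {x | ∀ r > (0:ℝ), 0 < μ (ball x r)})
    (h : ∀ K ⊆ S, IsCompact K → ∃ CK : ℝ,
      ∀ x ∈ K, ∀ t ∈ Set.Ioc (0:ℝ) 1, ∀ r ∈ Set.Ioc (0:ℝ) 1,
        |(μ (ball x (t * r))).toReal / (μ (ball x r)).toReal - t ^ n| ≤ CK * r ^ α)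
    (D : EuclideanSpace ℝ (Fin m) → ℝ)
    (hD : ∀ x ∈ S,
      Filter.Tendsto (fun r : ℝ => (μ (ball x r)).toReal / (omegaBall n * r ^ n))
        (nhdsWithin 0 (Set.Ioi 0)) (nhds (D x))) :
    ∀ K ⊆ S, IsCompact K → ∃ C' : ℝ,
      ∀ x ∈ K, ∀ y ∈ K,
        |Real.log (D x) - Real.log (D y)| ≤ C' * ‖x - y‖ ^ (α / (1 + α)) := by
  intro K hKS hKc
  rcases K.eq_empty_or_nonempty with hKe | ⟨x₀, hx₀⟩
  · exact ⟨0, by simp [hKe]⟩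
  obtain ⟨C₀, hC₀⟩ := h K hKS hKc
  set C : ℝ := max C₀ 1 with hCdef
  have hC1 : (1:ℝ) ≤ C := le_max_right _ _
  have hCpos : (0:ℝ) < C := lt_of_lt_of_le one_pos hC1
  -- basic positivity facts
  have hω : 0 < omegaBall n := by
    unfold omegaBall
    refine ENNReal.toReal_pos ?_ measure_ball_lt_top.ne
    exact (measure_ball_pos _ _ one_pos).ne'
  have hμpos : ∀ x ∈ K, ∀ r : ℝ, 0 < r → 0 < (μ (ball x r)).toReal := by
    intro x hx r hr
    have := hKS hx
    rw [hS] at this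
    exact ENNReal.toReal_pos (this r hr).ne' measure_ball_lt_top.ne
  set f : EuclideanSpace ℝ (Fin m) → ℝ → ℝ :=
    fun x r => (μ (ball x r)).toReal / (omegaBall n * r ^ n) with hfdef
  have hfpos : ∀ x ∈ K, ∀ r : ℝ, 0 < r → 0 < f x r := by
    intro x hx r hr
    exact div_pos (hμpos x hx r hr) (mul_pos hω (pow_pos hr n))
  -- step estimate on the ratio of f at scales r/2 and r
  have step : ∀ x ∈ K, ∀ r : ℝ, 0 < r → r ≤ 1 →
      |f x (2⁻¹ * r) / f x r - 1| ≤ 2 ^ n * C * r ^ α := by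
    intro x hx r hr hr1
    have hq := hC₀ x hx 2⁻¹ ⟨by norm_num, by norm_num⟩ r ⟨hr, hr1⟩
    have hq' : |(μ (ball x (2⁻¹ * r))).toReal / (μ (ball x r)).toReal - (2⁻¹:ℝ) ^ n|
        ≤ C * r ^ α := by
      refine hq.trans ?_
      have : (0:ℝ) ≤ r ^ α := Real.rpow_nonneg hr.le α
      exact mul_le_mul_of_nonneg_right (le_max_left _ _) this
    have ha : 0 < (μ (ball x (2⁻¹ * r))).toReal := hμpos x hx _ (by positivity)
    have hb : 0 < (μ (ball x r)).toReal := hμpos x hx r hr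
    have hfr : f x (2⁻¹ * r) / f x r
        = ((μ (ball x (2⁻¹ * r))).toReal / (μ (ball x r)).toReal) * 2 ^ n := by
      rw [hfdef]
      have h2 : ((2:ℝ)⁻¹ * r) ^ n = 2⁻¹ ^ n * r ^ n := mul_pow _ _ _
      field_simp
      rw [mul_assoc, div_pow, div_mul_cancel₀ _ (by positivity)]
    rw [hfr]
    have key : ((μ (ball x (2⁻¹ * r))).toReal / (μ (ball x r)).toReal) * 2 ^ n - 1
        = ((μ (ball x (2⁻¹ * r))).toReal / (μ (ball x r)).toReal - (2⁻¹:ℝ) ^ n) * 2 ^ n := by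
      have : ((2:ℝ)⁻¹) ^ n * 2 ^ n = 1 := by
        rw [← mul_pow]; norm_num
      ring_nf
      nlinarith [this]
    rw [key, abs_mul, abs_of_pos (pow_pos (by norm_num : (0:ℝ) < 2) n)]
    calc |(μ (ball x (2⁻¹ * r))).toReal / (μ (ball x r)).toReal - (2⁻¹:ℝ) ^ n| * 2 ^ n
        ≤ (C * r ^ α) * 2 ^ n := by
          exact mul_le_mul_of_nonneg_right hq' (by positivity)
      _ = 2 ^ n * C * r ^ α := by ring
  -- choice of the threshold radius r0
  set r0 : ℝ := min 1 (((2:ℝ)^(n+2) * C)⁻¹ ^ α⁻¹) with hr0def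
  have hr0pos : 0 < r0 := by
    apply lt_min one_pos
    apply Real.rpow_pos_of_pos
    positivity
  have hr01 : r0 ≤ 1 := min_le_left _ _
  have hsmall : ∀ r : ℝ, 0 < r → r ≤ r0 → 2 ^ n * C * r ^ α ≤ 1/4 := by
    intro r hr hrr0
    have h1 : r ^ α ≤ (((2:ℝ)^(n+2) * C)⁻¹ ^ α⁻¹) ^ α :=
      Real.rpow_le_rpow hr.le (hrr0.trans (min_le_right _ _)) hα.le
    rw [Real.rpow_inv_rpow (by positivity) hα.ne'] at h1
    have h2 : (2:ℝ) ^ n * C * ((2:ℝ)^(n+2) * C)⁻¹ = 1/4 := by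
      rw [pow_add]
      field_simp
      ring
    calc 2 ^ n * C * r ^ α ≤ 2 ^ n * C * ((2:ℝ)^(n+2) * C)⁻¹ := by
          exact mul_le_mul_of_nonneg_left h1 (by positivity)
      _ = 1/4 := h2
  -- single-step estimate for the logarithm
  have logstep : ∀ x ∈ K, ∀ r : ℝ, 0 < r → r ≤ r0 →
      |Real.log (f x (2⁻¹ * r)) - Real.log (f x r)| ≤ 2 ^ (n+1) * C * r ^ α := by
    intro x hx r hr hrr0
    have hs := step x hx r hr (hrr0.trans hr01)
    have hs4 : |f x (2⁻¹ * r) / f x r - 1| ≤ 1/4 := hs.trans (hsmall r hr hrr0)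
    have hu : (1:ℝ)/2 ≤ f x (2⁻¹ * r) / f x r := by
      have := abs_le.1 hs4
      linarith [this.1]
    have hlu := myabslog _ hu
    have ha : 0 < f x (2⁻¹ * r) := hfpos x hx _ (by positivity)
    have hb : 0 < f x r := hfpos x hx r hr
    rw [← Real.log_div ha.ne' hb.ne']
    calc |Real.log (f x (2⁻¹ * r) / f x r)| ≤ 2 * |f x (2⁻¹ * r) / f x r - 1| := hlu
      _ ≤ 2 * (2 ^ n * C * r ^ α) := by linarith
      _ = 2 ^ (n+1) * C * r ^ α := by ring
  -- geometric data
  set θ : ℝ := (2:ℝ)⁻¹ ^ α with hθdef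
  have hθ0 : (0:ℝ) ≤ θ := Real.rpow_nonneg (by norm_num) α
  have hθ1 : θ < 1 := Real.rpow_lt_one (by norm_num) (by norm_num) hα
  set G : ℝ := (1 - θ)⁻¹ with hGdef
  have hGpos : 0 < G := inv_pos.2 (by linarith)
  set C3 : ℝ := 2 ^ (n+1) * C * G with hC3def
  have hC3pos : 0 < C3 := by positivity
  have hpowk : ∀ k : ℕ, ((2:ℝ)⁻¹ ^ k) ^ α = θ ^ k := by
    intro k
    rw [← Real.rpow_natCast ((2:ℝ)⁻¹) k, ← Real.rpow_natCast θ k, hθdef,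
      ← Real.rpow_mul (by norm_num : (0:ℝ) ≤ 2⁻¹),
      ← Real.rpow_mul (by norm_num : (0:ℝ) ≤ 2⁻¹), mul_comm]
  -- telescoping estimate
  have tele : ∀ x ∈ K, ∀ r : ℝ, 0 < r → r ≤ r0 → ∀ k : ℕ,
      |Real.log (f x (2⁻¹ ^ k * r)) - Real.log (f x r)|
        ≤ 2 ^ (n+1) * C * r ^ α * ∑ j ∈ Finset.range k, θ ^ j := by
    intro x hx r hr hrr0 k
    induction k with
    | zero => simp
    | succ k ih =>
      have hr' : 0 < (2:ℝ)⁻¹ ^ k * r := by positivity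
      have hr'0 : (2:ℝ)⁻¹ ^ k * r ≤ r0 := by
        calc (2:ℝ)⁻¹ ^ k * r ≤ 1 * r := by
              apply mul_le_mul_of_nonneg_right _ hr.le
              exact pow_le_one₀ (by norm_num) (by norm_num)
          _ = r := one_mul r
          _ ≤ r0 := hrr0
      have hls := logstep x hx _ hr' hr'0
      have hval : ((2:ℝ)⁻¹ ^ k * r) ^ α = θ ^ k * r ^ α := by
        rw [Real.mul_rpow (by positivity) hr.le, hpowk]
      rw [hval] at hls
      have heq : (2:ℝ)⁻¹ * ((2:ℝ)⁻¹ ^ k * r) = 2⁻¹ ^ (k+1) * r := by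
        rw [pow_succ]; ring
      rw [heq] at hls
      calc |Real.log (f x (2⁻¹ ^ (k+1) * r)) - Real.log (f x r)|
          ≤ |Real.log (f x (2⁻¹ ^ (k+1) * r)) - Real.log (f x (2⁻¹ ^ k * r))|
            + |Real.log (f x (2⁻¹ ^ k * r)) - Real.log (f x r)| := abs_sub_le _ _ _
        _ ≤ 2 ^ (n+1) * C * (θ ^ k * r ^ α)
            + 2 ^ (n+1) * C * r ^ α * ∑ j ∈ Finset.range k, θ ^ j := add_le_add hls ih
        _ = 2 ^ (n+1) * C * r ^ α * ∑ j ∈ Finset.range (k+1), θ ^ j := by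
            rw [Finset.sum_range_succ]; ring
  have teleB : ∀ x ∈ K, ∀ r : ℝ, 0 < r → r ≤ r0 → ∀ k : ℕ,
      |Real.log (f x (2⁻¹ ^ k * r)) - Real.log (f x r)| ≤ C3 * r ^ α := by
    intro x hx r hr hrr0 k
    refine (tele x hx r hr hrr0 k).trans ?_
    have := mygeom θ hθ0 hθ1 k
    calc 2 ^ (n+1) * C * r ^ α * ∑ j ∈ Finset.range k, θ ^ j
        ≤ 2 ^ (n+1) * C * r ^ α * (1 - θ)⁻¹ := by
          apply mul_le_mul_of_nonneg_left this (by positivity)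
      _ = C3 * r ^ α := by rw [hC3def, hGdef]; ring
  -- the dyadic sequence converges into the density limit
  have hseq : ∀ r : ℝ, 0 < r →
      Filter.Tendsto (fun k : ℕ => (2:ℝ)⁻¹ ^ k * r) Filter.atTop
        (nhdsWithin 0 (Set.Ioi 0)) := by
    intro r hr
    apply tendsto_nhdsWithin_of_tendsto_nhds_of_eventually_within
    · have := (tendsto_pow_atTop_nhds_zero_of_lt_one
        (by norm_num : (0:ℝ) ≤ 2⁻¹) (by norm_num : (2:ℝ)⁻¹ < 1)).mul_const r
      simpa using this
    · filter_upwards with k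
      exact Set.mem_Ioi.2 (by positivity)
  have hfseq : ∀ x ∈ K, ∀ r : ℝ, 0 < r →
      Filter.Tendsto (fun k : ℕ => f x ((2:ℝ)⁻¹ ^ k * r)) Filter.atTop (nhds (D x)) := by
    intro x hx r hr
    exact (hD x (hKS hx)).comp (hseq r hr)
  -- positivity of the density
  have hDpos : ∀ x ∈ K, 0 < D x := by
    intro x hx
    have hbd : ∀ k : ℕ, Real.exp (Real.log (f x r0) - C3 * r0 ^ α)
        ≤ f x ((2:ℝ)⁻¹ ^ k * r0) := by
      intro k
      have := (abs_le.1 (teleB x hx r0 hr0pos le_rfl k)).1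
      have hfp : 0 < f x ((2:ℝ)⁻¹ ^ k * r0) := hfpos x hx _ (by positivity)
      calc Real.exp (Real.log (f x r0) - C3 * r0 ^ α)
          ≤ Real.exp (Real.log (f x ((2:ℝ)⁻¹ ^ k * r0))) := Real.exp_le_exp.2 (by linarith)
        _ = f x ((2:ℝ)⁻¹ ^ k * r0) := Real.exp_log hfp
    have := ge_of_tendsto' (hfseq x hx r0 hr0pos) hbd
    exact lt_of_lt_of_le (Real.exp_pos _) this
  -- main estimate: log D is close to log f at every small scale
  have lemA : ∀ x ∈ K, ∀ r : ℝ, 0 < r → r ≤ r0 →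
      |Real.log (D x) - Real.log (f x r)| ≤ C3 * r ^ α := by
    intro x hx r hr hrr0
    have hlog : Filter.Tendsto (fun k : ℕ => Real.log (f x ((2:ℝ)⁻¹ ^ k * r)))
        Filter.atTop (nhds (Real.log (D x))) :=
      ((Real.continuousAt_log (hDpos x hx).ne').tendsto).comp (hfseq x hx r hr)
    have habs : Filter.Tendsto
        (fun k : ℕ => |Real.log (f x ((2:ℝ)⁻¹ ^ k * r)) - Real.log (f x r)|)
        Filter.atTop (nhds (|Real.log (D x) - Real.log (f x r)|)) :=
      ((hlog.sub_const _).abs)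
    exact le_of_tendsto habs (Filter.Eventually.of_forall (teleB x hx r hr hrr0))
  -- one-sided comparison between two points
  have lemB : ∀ x ∈ K, ∀ y ∈ K, ∀ r : ℝ, 0 < r → r + ‖x - y‖ ≤ r0 →
      Real.log (D x) - Real.log (D y)
        ≤ 2 * C3 * (r + ‖x - y‖) ^ α + n * Real.log ((r + ‖x - y‖) / r) := by
    intro x hx y hy r hr hrd
    set d : ℝ := ‖x - y‖ with hddef
    have hd0 : 0 ≤ d := norm_nonneg _
    have hrd0 : 0 < r + d := by linarith
    have hsub : ball x r ⊆ ball y (r + d) := by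
      apply ball_subset_ball'
      rw [dist_eq_norm]
    have hμle : (μ (ball x r)).toReal ≤ (μ (ball y (r + d))).toReal :=
      ENNReal.toReal_mono measure_ball_lt_top.ne (measure_mono hsub)
    have hr' : (0:ℝ) < r ^ n := pow_pos hr n
    have hrd' : (0:ℝ) < (r + d) ^ n := pow_pos hrd0 n
    have hfle : f x r ≤ f y (r + d) * ((r + d) / r) ^ n := by
      have e1 : f x r = (μ (ball x r)).toReal / (omegaBall n * r ^ n) := rfl
      have e2 : f y (r + d)
          = (μ (ball y (r + d))).toReal / (omegaBall n * (r + d) ^ n) := rfl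
      have e3 : f y (r + d) * ((r + d) / r) ^ n
          = (μ (ball y (r + d))).toReal / (omegaBall n * r ^ n) := by
        rw [e2, div_pow]
        field_simp
      rw [e1, e3]
      gcongr
    have hlogf : Real.log (f x r)
        ≤ Real.log (f y (r + d)) + n * Real.log ((r + d) / r) := by
      have hp1 : 0 < f y (r + d) := hfpos y hy _ hrd0
      have hp2 : (0:ℝ) < ((r + d) / r) ^ n := pow_pos (div_pos hrd0 hr) n
      have h1 : Real.log (f x r) ≤ Real.log (f y (r + d) * ((r + d) / r) ^ n) :=
        Real.log_le_log (hfpos x hx r hr) hfle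
      rwa [Real.log_mul hp1.ne' hp2.ne', Real.log_pow] at h1
    have hAx := abs_le.1 (lemA x hx r hr (by linarith))
    have hAy := abs_le.1 (lemA y hy (r + d) hrd0 hrd)
    have hmono : C3 * r ^ α ≤ C3 * (r + d) ^ α :=
      mul_le_mul_of_nonneg_left (Real.rpow_le_rpow hr.le (by linarith) hα.le) hC3pos.le
    linarith [hAx.2, hAy.1]
  -- uniform upper and lower bounds for f · r0 on K
  obtain ⟨R, hR⟩ := hKc.isBounded.subset_closedBall x₀
  set Mμ : ℝ := (μ (closedBall x₀ (R + r0))).toReal with hMμdef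
  have hMup : ∀ x ∈ K, (μ (ball x r0)).toReal ≤ Mμ := by
    intro x hx
    have hsub : ball x r0 ⊆ closedBall x₀ (R + r0) := by
      intro z hz
      rw [mem_closedBall]
      have h1 : dist z x < r0 := mem_ball.1 hz
      have h2 : dist x x₀ ≤ R := hR hx
      calc dist z x₀ ≤ dist z x + dist x x₀ := dist_triangle _ _ _
        _ ≤ R + r0 := by linarith
    exact ENNReal.toReal_mono (measure_closedBall_lt_top).ne (measure_mono hsub)
  have hcover : K ⊆ ⋃ z : K, ball (z : EuclideanSpace ℝ (Fin m)) (r0/2) := by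
    intro x hx
    exact Set.mem_iUnion.2 ⟨⟨x, hx⟩, mem_ball_self (by positivity)⟩
  obtain ⟨t, ht⟩ := hKc.elim_finite_subcover _ (fun z : K => isOpen_ball) hcover
  have htne : t.Nonempty := by
    rcases Set.mem_iUnion₂.1 (ht hx₀) with ⟨z, hz, _⟩
    exact ⟨z, hz⟩
  set m0 : ℝ := t.inf' htne
    (fun z : K => (μ (ball (z : EuclideanSpace ℝ (Fin m)) (r0/2))).toReal) with hm0def
  have hm0 : 0 < m0 := by
    rw [hm0def, Finset.lt_inf'_iff]
    intro z _
    exact hμpos z z.2 _ (by positivity)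
  have hMlow : ∀ x ∈ K, m0 ≤ (μ (ball x r0)).toReal := by
    intro x hx
    rcases Set.mem_iUnion₂.1 (ht hx) with ⟨z, hzt, hxz⟩
    have hsub : ball (z : EuclideanSpace ℝ (Fin m)) (r0/2) ⊆ ball x r0 := by
      apply ball_subset_ball'
      have : dist (z : EuclideanSpace ℝ (Fin m)) x < r0/2 := by
        rw [dist_comm]; exact mem_ball.1 hxz
      linarith
    calc m0 ≤ (μ (ball (z : EuclideanSpace ℝ (Fin m)) (r0/2))).toReal :=
          Finset.inf'_le _ hzt
      _ ≤ (μ (ball x r0)).toReal :=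
          ENNReal.toReal_mono measure_ball_lt_top.ne (measure_mono hsub)
  -- global bounds on log D over K
  set a : ℝ := Real.log (m0 / (omegaBall n * r0 ^ n)) - C3 * r0 ^ α with hadef
  set b : ℝ := Real.log (Mμ / (omegaBall n * r0 ^ n)) + C3 * r0 ^ α with hbdef
  have hwn : (0:ℝ) < omegaBall n * r0 ^ n := mul_pos hω (pow_pos hr0pos n)
  have hab : ∀ x ∈ K, a ≤ Real.log (D x) ∧ Real.log (D x) ≤ b := by
    intro x hx
    have hA := abs_le.1 (lemA x hx r0 hr0pos le_rfl)
    have ef : f x r0 = (μ (ball x r0)).toReal / (omegaBall n * r0 ^ n) := rfl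
    have hf1 : m0 / (omegaBall n * r0 ^ n) ≤ f x r0 := by
      rw [ef]; gcongr; exact hMlow x hx
    have hf2 : f x r0 ≤ Mμ / (omegaBall n * r0 ^ n) := by
      rw [ef]; gcongr; exact hMup x hx
    have hl1 : Real.log (m0 / (omegaBall n * r0 ^ n)) ≤ Real.log (f x r0) :=
      Real.log_le_log (div_pos hm0 hwn) hf1
    have hl2 : Real.log (f x r0) ≤ Real.log (Mμ / (omegaBall n * r0 ^ n)) :=
      Real.log_le_log (hfpos x hx r0 hr0pos) hf2
    constructor
    · rw [hadef]; linarith [hA.1]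
    · rw [hbdef]; linarith [hA.2]
  have hba : 0 ≤ b - a := by
    have := hab x₀ hx₀
    linarith [this.1, this.2]
  -- assemble the final constant
  set β : ℝ := α / (1 + α) with hβdef
  have hβpos : 0 < β := div_pos hα (by linarith)
  set δ : ℝ := (r0/2) ^ (1 + α) with hδdef
  have hδpos : 0 < δ := Real.rpow_pos_of_pos (by positivity) _
  have hδ1 : δ ≤ 1 := Real.rpow_le_one (by positivity) (by linarith) (by linarith)
  refine ⟨max (2 * C3 * 2 ^ α + n) ((b - a) / δ ^ β), ?_⟩
  intro x hx y hy
  set d : ℝ := ‖x - y‖ with hddef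
  have hd0 : 0 ≤ d := norm_nonneg _
  have hC'0 : 0 ≤ max (2 * C3 * 2 ^ α + n) ((b - a) / δ ^ β) := by
    have : (0:ℝ) ≤ 2 * C3 * 2 ^ α + n := by positivity
    exact le_max_of_le_left this
  rcases eq_or_lt_of_le hd0 with hd | hd
  · -- d = 0 : x = y
    have hxy : x = y := by
      have h0 : ‖x - y‖ = 0 := by rw [← hddef]; exact hd.symm
      rwa [norm_sub_eq_zero_iff] at h0
    rw [hxy, sub_self, abs_zero, ← hd, Real.zero_rpow hβpos.ne', mul_zero]
  rcases le_or_gt d δ with hdδ | hdδ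
  · -- small distance
    set r : ℝ := d ^ (1 + α)⁻¹ with hrdef
    have hr : 0 < r := Real.rpow_pos_of_pos hd _
    have hrle : r ≤ r0/2 := by
      have h1 : d ^ (1 + α)⁻¹ ≤ δ ^ (1 + α)⁻¹ :=
        Real.rpow_le_rpow hd0 hdδ (by positivity)
      rwa [hδdef, Real.rpow_rpow_inv (by positivity) (by positivity)] at h1
    have hd1 : d ≤ 1 := hdδ.trans hδ1
    have hdr : d ≤ r := by
      rw [hrdef]
      nth_rewrite 1 [← Real.rpow_one d]
      apply Real.rpow_le_rpow_of_exponent_ge hd hd1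
      rw [inv_le_one_iff₀]
      right; linarith
    have hrd0 : r + d ≤ r0 := by linarith
    have hB1 := lemB x hx y hy r hr (by rw [← hddef]; exact hrd0)
    have hB2 := lemB y hy x hx r hr (by rw [norm_sub_rev, ← hddef]; exact hrd0)
    rw [norm_sub_rev y x, ← hddef] at hB2
    rw [← hddef] at hB1
    have hrdle : r + d ≤ 2 * r := by linarith
    have hpow1 : (r + d) ^ α ≤ 2 ^ α * r ^ α := by
      calc (r + d) ^ α ≤ (2 * r) ^ α :=
            Real.rpow_le_rpow (by linarith) hrdle hα.le
        _ = 2 ^ α * r ^ α := Real.mul_rpow (by norm_num) hr.le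
    have hrα : r ^ α = d ^ β := by
      rw [hrdef, ← Real.rpow_mul hd0, hβdef]
      congr 1
      field_simp
    have hdrβ : d / r = d ^ β := by
      have hexp : (1:ℝ) - (1+α)⁻¹ = β := by
        rw [hβdef]; field_simp; ring
      calc d / r = d ^ (1:ℝ) / d ^ (1+α)⁻¹ := by rw [Real.rpow_one, hrdef]
        _ = d ^ ((1:ℝ) - (1+α)⁻¹) := (Real.rpow_sub hd _ _).symm
        _ = d ^ β := by rw [hexp]
    have habs : |Real.log (D x) - Real.log (D y)|
        ≤ 2 * C3 * (r + d) ^ α + n * Real.log ((r + d) / r) :=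
      abs_sub_le_iff.2 ⟨hB1, hB2⟩
    have hlog2 : Real.log ((r + d) / r) ≤ d / r := by
      have hu : 0 < (r + d) / r := by positivity
      have h1 := Real.log_le_sub_one_of_pos hu
      have heq : (r + d) / r - 1 = d / r := by field_simp; ring
      linarith
    have hnlog : (n:ℝ) * Real.log ((r + d) / r) ≤ n * (d / r) :=
      mul_le_mul_of_nonneg_left hlog2 (by positivity)
    have hdβ : (0:ℝ) ≤ d ^ β := Real.rpow_nonneg hd0 β
    calc |Real.log (D x) - Real.log (D y)|
        ≤ 2 * C3 * (r + d) ^ α + n * Real.log ((r + d) / r) := habs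
      _ ≤ 2 * C3 * (2 ^ α * r ^ α) + n * (d / r) := by
          have h2 := mul_le_mul_of_nonneg_left hpow1 (by positivity : (0:ℝ) ≤ 2 * C3)
          linarith
      _ = (2 * C3 * 2 ^ α + n) * d ^ β := by rw [hrα, hdrβ]; ring
      _ ≤ max (2 * C3 * 2 ^ α + n) ((b - a) / δ ^ β) * d ^ β :=
          mul_le_mul_of_nonneg_right (le_max_left _ _) hdβ
  · -- large distance
    have hDxy : |Real.log (D x) - Real.log (D y)| ≤ b - a := by
      have h1 := hab x hx
      have h2 := hab y hy
      rw [abs_le]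
      constructor <;> linarith [h1.1, h1.2, h2.1, h2.2]
    have hδd : δ ^ β ≤ d ^ β := Real.rpow_le_rpow hδpos.le hdδ.le hβpos.le
    have hδβ : 0 < δ ^ β := Real.rpow_pos_of_pos hδpos _
    calc |Real.log (D x) - Real.log (D y)| ≤ b - a := hDxy
      _ = (b - a) / δ ^ β * δ ^ β := by field_simp
      _ ≤ (b - a) / δ ^ β * d ^ β := by
          apply mul_le_mul_of_nonneg_left hδd (by positivity)
      _ ≤ max (2 * C3 * 2 ^ α + n) ((b - a) / δ ^ β) * d ^ β := by
          apply mul_le_mul_of_nonneg_right (le_max_right _ _)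
          positivity
end
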